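/- Let A = (A1 A2) ∈ ℝ^{m×n} with A1 ∈ ℝ^{m×k} of full rank k, and let τ > 0. For weight matrices W = (W1 W2) with W1 ∈ ℝ^{m×k}, W2 ∈ ℝ^{m×(n−k)}, let (X̂1(W) X̂2(W)) be a minimizer of ‖((A1 A2) − (X1 X2)) ⊙ (W1 W2)‖_F² + τ·rank(X1 X2) over all (X1 X2) ∈ ℝ^{m×n}. Then the family {(X̂1(W) X̂2(W))} is bounded as (W1)_{ij} → ∞ and (W2)_{ij} → 1, and every accumulation point of (X̂1(W) X̂2(W)) in this limit belongs to the union over 0 ≤ r ≤ min{m,n} of the solution sets 𝒜_G^r of the Golub–Hoffman–Stewart problems; in particular every accumulation point has the form (A1, P_{A1}(A2) + H_{r−k}(P⊥_{A1}(A2))) for some r. -/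

import Mathlib

open Matrix Filter Topology

noncomputable def frob {α β : Type*} [Fintype α] [Fintype β] (M : Matrix α β ℝ) : ℝ :=
  Real.sqrt (∑ i, ∑ j, (M i j) ^ 2)

noncomputable def projCol {m k : ℕ} (B : Matrix (Fin m) (Fin k) ℝ) :
    Matrix (Fin m) (Fin m) ℝ :=
  B * (Bᵀ * B)⁻¹ * Bᵀ

lemma frob_sq {α β : Type*} [Fintype α] [Fintype β] (M : Matrix α β ℝ) :
    frob M ^ 2 = ∑ i, ∑ j, (M i j) ^ 2 := by
  rw [frob, Real.sq_sqrt]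
  positivity

lemma entry_sq_le_frob_sq {α β : Type*} [Fintype α] [Fintype β] (M : Matrix α β ℝ)
    (i : α) (j : β) : (M i j) ^ 2 ≤ frob M ^ 2 := by
  rw [frob_sq]
  calc (M i j)^2 ≤ ∑ j', (M i j')^2 :=
        Finset.single_le_sum (f := fun j' => (M i j')^2) (fun _ _ => sq_nonneg _) (Finset.mem_univ j)
    _ ≤ ∑ i', ∑ j', (M i' j')^2 :=
        Finset.single_le_sum (f := fun i' => ∑ j', (M i' j')^2)
          (fun _ _ => Finset.sum_nonneg fun _ _ => sq_nonneg _) (Finset.mem_univ i)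

lemma frob_zero {α β : Type*} [Fintype α] [Fintype β] : frob (0 : Matrix α β ℝ) = 0 := by
  simp [frob]

section LSC
open Submodule

/-- column selection as multiplication -/
lemma submatrix_eq_mul_sel {m n : Type*} [Fintype m] [Fintype n] [DecidableEq n] {r : ℕ}
    (M : Matrix m n ℝ) (σ : Fin r → n) :
    M.submatrix id σ = M * (Matrix.of fun j s => if j = σ s then (1:ℝ) else 0) := by
  ext i s
  simp [Matrix.mul_apply, Matrix.submatrix_apply, mul_ite, mul_one, mul_zero,
    Finset.sum_ite_eq' Finset.univ (σ s) (fun j => M i j)]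

lemma rank_sel_le {m n : Type*} [Fintype m] [Fintype n] [DecidableEq n] {r : ℕ}
    (M : Matrix m n ℝ) (σ : Fin r → n) :
    (M.submatrix id σ).rank ≤ M.rank := by
  rw [submatrix_eq_mul_sel]
  exact Matrix.rank_mul_le_left _ _

lemma det_gram_ne_zero {m : Type*} [Fintype m] {r : ℕ} (C : Matrix m (Fin r) ℝ)
    (h : LinearIndependent ℝ Cᵀ) : (Cᵀ * C).det ≠ 0 := by
  intro hdet
  obtain ⟨v, hv0, hv⟩ := Matrix.exists_mulVec_eq_zero_iff.2 hdet
  have hw : C *ᵥ v = 0 := by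
    have h1 : (C *ᵥ v) ⬝ᵥ (C *ᵥ v) = 0 := by
      have : v ⬝ᵥ ((Cᵀ * C) *ᵥ v) = 0 := by rw [hv, dotProduct_zero]
      rwa [← Matrix.mulVec_mulVec, Matrix.dotProduct_mulVec, Matrix.vecMul_transpose] at this
    funext i
    have hz := (Finset.sum_eq_zero_iff_of_nonneg
      (s := Finset.univ) (f := fun i => (C *ᵥ v) i * (C *ᵥ v) i)
      (fun i _ => mul_self_nonneg ((C *ᵥ v) i))).1 h1 i (Finset.mem_univ i)
    simpa using mul_self_eq_zero.1 hz
  apply hv0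
  have := Fintype.linearIndependent_iff.1 h v ?_
  · funext s; exact this s
  · funext i
    simpa [Matrix.mulVec, dotProduct, mul_comm] using congrFun hw i

lemma rank_lsc {m n : Type*} [Fintype m] [Fintype n] [DecidableEq n]
    (L : Matrix m n ℝ) (M : ℕ → Matrix m n ℝ)
    (h : Tendsto M atTop (nhds L)) : ∀ᶠ t in atTop, L.rank ≤ (M t).rank := by
  classical
  set r := L.rank with hr
  -- find r linearly independent columns of L
  obtain ⟨b, hbsub, hbspan, hbli⟩ := exists_linearIndependent ℝ (Set.range Lᵀ)
  have hbfin : b.Finite := Set.Finite.subset (Set.finite_range Lᵀ) hbsub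
  haveI : Fintype b := hbfin.fintype
  have hcard : Fintype.card b = r := by
    have h1 : Module.finrank ℝ (span ℝ b) = b.toFinset.card := finrank_span_set_eq_card hbli
    have h2 : L.rank = Module.finrank ℝ (span ℝ (Set.range Lᵀ)) := Matrix.rank_eq_finrank_span_cols L
    rw [hr, h2, ← hbspan, h1, Set.toFinset_card]
  let e : Fin r ≃ b := (Fintype.equivFinOfCardEq hcard).symm
  have hpick : ∀ x : b, ∃ j : n, Lᵀ j = (x : m → ℝ) := fun x => hbsub x.2
  choose pick hpickeq using hpick
  set σ : Fin r → n := fun s => pick (e s) with hσ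
  set C : Matrix m (Fin r) ℝ := L.submatrix id σ with hC
  have hCcols : Cᵀ = (fun x : b => (x : m → ℝ)) ∘ e := by
    funext s
    exact hpickeq (e s)
  have hCli : LinearIndependent ℝ Cᵀ := by
    rw [hCcols]
    exact hbli.comp e e.injective
  -- continuity of the Gram determinant
  have hcont : Continuous fun (N : Matrix m n ℝ) =>
      ((N.submatrix id σ)ᵀ * (N.submatrix id σ)).det :=
    (((continuous_id.matrix_submatrix id σ).matrix_transpose).matrix_mul
      (continuous_id.matrix_submatrix id σ)).matrix_det
  have hne : ((L.submatrix id σ)ᵀ * (L.submatrix id σ)).det ≠ 0 := det_gram_ne_zero _ hCli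
  have hev : ∀ᶠ t in atTop, (((M t).submatrix id σ)ᵀ * ((M t).submatrix id σ)).det ≠ 0 :=
    (((hcont.tendsto L).comp h).eventually_ne hne)
  filter_upwards [hev] with t ht
  have h1 : (((M t).submatrix id σ)ᵀ * ((M t).submatrix id σ)).rank = r := by
    rw [Matrix.rank_of_isUnit _ ((Matrix.isUnit_iff_isUnit_det _).2 (isUnit_iff_ne_zero.2 ht))]
    simp
  have h2 : (((M t).submatrix id σ)ᵀ * ((M t).submatrix id σ)).rank = ((M t).submatrix id σ).rank :=
    Matrix.rank_transpose_mul_self _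
  calc r = ((M t).submatrix id σ).rank := by rw [← h2, h1]
    _ ≤ (M t).rank := rank_sel_le _ _

end LSC

/-- **Theorem 2.2.** For weights `(W1 W2)` with `(W1)_{ij} → ∞` and `(W2)_{ij} → 1`, the
minimizers `(X̂1(W) X̂2(W))` of `‖((A1 A2) − (X1 X2)) ⊙ (W1 W2)‖_F² + τ·rank (X1 X2)` stay
bounded, and every accumulation point belongs to the union over `0 ≤ r ≤ min {m, n}` of the
solution sets of the Golub–Hoffman–Stewart problems. -/
theorem stmt_2 {m k l : ℕ}
    (A1 : Matrix (Fin m) (Fin k) ℝ) (A2 : Matrix (Fin m) (Fin l) ℝ)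
    (τ : ℝ) (hτ : 0 < τ) (hrank : A1.rank = k)
    (W1 : ℕ → Matrix (Fin m) (Fin k) ℝ) (W2 : ℕ → Matrix (Fin m) (Fin l) ℝ)
    (hW1pos : ∀ t i j, 0 < W1 t i j)
    (hW1 : ∀ i j, Tendsto (fun t => W1 t i j) atTop atTop)
    (hW2 : ∀ i j, Tendsto (fun t => W2 t i j) atTop (nhds 1))
    (X1 : ℕ → Matrix (Fin m) (Fin k) ℝ) (X2 : ℕ → Matrix (Fin m) (Fin l) ℝ)
    (hmin : ∀ t, ∀ (Y1 : Matrix (Fin m) (Fin k) ℝ) (Y2 : Matrix (Fin m) (Fin l) ℝ),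
      frob (Matrix.hadamard (A1 - X1 t) (W1 t)) ^ 2 +
          frob (Matrix.hadamard (A2 - X2 t) (W2 t)) ^ 2 +
          τ * ((Matrix.fromCols (X1 t) (X2 t)).rank : ℝ) ≤
        frob (Matrix.hadamard (A1 - Y1) (W1 t)) ^ 2 +
          frob (Matrix.hadamard (A2 - Y2) (W2 t)) ^ 2 +
          τ * ((Matrix.fromCols Y1 Y2).rank : ℝ)) :
    (∃ R : ℝ, ∀ᶠ t in atTop, frob (Matrix.fromCols (X1 t) (X2 t)) ≤ R) ∧
    ∀ L : Matrix (Fin m) (Fin k ⊕ Fin l) ℝ,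
      (∃ φ : ℕ → ℕ, StrictMono φ ∧
        Tendsto (fun t => Matrix.fromCols (X1 (φ t)) (X2 (φ t))) atTop (nhds L)) →
      ∃ r ≤ min m (k + l), ∃ Z2 : Matrix (Fin m) (Fin l) ℝ,
        L = Matrix.fromCols A1 Z2 ∧
        (Matrix.fromCols A1 Z2).rank ≤ r ∧
        ∀ Y2 : Matrix (Fin m) (Fin l) ℝ, (Matrix.fromCols A1 Y2).rank ≤ r →
          frob (A2 - Z2) ≤ frob (A2 - Y2) := by
  classical
  set C : ℝ := τ * ((Matrix.fromCols A1 A2).rank : ℝ) with hCdef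
  have hC0 : 0 ≤ C := mul_nonneg hτ.le (Nat.cast_nonneg _)
  have key : ∀ t, frob (Matrix.hadamard (A1 - X1 t) (W1 t)) ^ 2 +
      frob (Matrix.hadamard (A2 - X2 t) (W2 t)) ^ 2 +
      τ * ((Matrix.fromCols (X1 t) (X2 t)).rank : ℝ) ≤ C := by
    intro t
    have h := hmin t A1 A2
    simpa [sub_self, Matrix.zero_hadamard, frob_zero, hCdef] using h
  have hrk0 : ∀ t, 0 ≤ τ * ((Matrix.fromCols (X1 t) (X2 t)).rank : ℝ) :=
    fun t => mul_nonneg hτ.le (Nat.cast_nonneg _)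
  have hS1 : ∀ t, frob (Matrix.hadamard (A1 - X1 t) (W1 t)) ^ 2 ≤ C := fun t => by
    nlinarith [key t, sq_nonneg (frob (Matrix.hadamard (A2 - X2 t) (W2 t))), hrk0 t]
  have hS2 : ∀ t, frob (Matrix.hadamard (A2 - X2 t) (W2 t)) ^ 2 ≤ C := fun t => by
    nlinarith [key t, sq_nonneg (frob (Matrix.hadamard (A1 - X1 t) (W1 t))), hrk0 t]
  have hE1 : ∀ t i j, ((A1 i j - X1 t i j) * W1 t i j) ^ 2 ≤ C := by
    intro t i j
    have h := (entry_sq_le_frob_sq (Matrix.hadamard (A1 - X1 t) (W1 t)) i j).trans (hS1 t)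
    simpa [Matrix.hadamard_apply, Matrix.sub_apply] using h
  have hE2 : ∀ t i j, ((A2 i j - X2 t i j) * W2 t i j) ^ 2 ≤ C := by
    intro t i j
    have h := (entry_sq_le_frob_sq (Matrix.hadamard (A2 - X2 t) (W2 t)) i j).trans (hS2 t)
    simpa [Matrix.hadamard_apply, Matrix.sub_apply] using h
  constructor
  · -- boundedness
    set SA : ℝ := frob (Matrix.fromCols A1 A2) ^ 2 with hSA
    set B : ℝ := 2 * SA + 8 * C with hB
    have hSA0 : 0 ≤ SA := sq_nonneg _
    refine ⟨Real.sqrt (((m * (k + l) : ℕ) : ℝ) * B), ?_⟩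
    have hW1ev : ∀ᶠ t in atTop, ∀ i j, 1 ≤ W1 t i j :=
      eventually_all.2 fun i => eventually_all.2 fun j => (hW1 i j).eventually_ge_atTop 1
    have hW2ev : ∀ᶠ t in atTop, ∀ i j, (1:ℝ)/2 ≤ W2 t i j :=
      eventually_all.2 fun i => eventually_all.2 fun j =>
        (hW2 i j).eventually (eventually_ge_nhds (by norm_num))
    filter_upwards [hW1ev, hW2ev] with t h1 h2
    have hEntry : ∀ i (j : Fin k ⊕ Fin l), (Matrix.fromCols (X1 t) (X2 t)) i j ^ 2 ≤ B := by
      intro i j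
      cases j with
      | inl j =>
        have hA : (A1 i j) ^ 2 ≤ SA := by
          have h := entry_sq_le_frob_sq (Matrix.fromCols A1 A2) i (Sum.inl j)
          simpa [Matrix.fromCols_apply_inl] using h
        have hd : (A1 i j - X1 t i j) ^ 2 ≤ C := by
          have hw := h1 i j
          have hw2 : 1 ≤ (W1 t i j) ^ 2 := by nlinarith
          have h6 : (A1 i j - X1 t i j) ^ 2 ≤ (A1 i j - X1 t i j) ^ 2 * (W1 t i j) ^ 2 :=
            le_mul_of_one_le_right (sq_nonneg _) hw2
          calc (A1 i j - X1 t i j) ^ 2 ≤ (A1 i j - X1 t i j) ^ 2 * (W1 t i j) ^ 2 := h6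
            _ = ((A1 i j - X1 t i j) * W1 t i j) ^ 2 := (mul_pow _ _ _).symm
            _ ≤ C := hE1 t i j
        simp only [Matrix.fromCols_apply_inl]
        nlinarith [sq_nonneg (2 * A1 i j - X1 t i j)]
      | inr j =>
        have hA : (A2 i j) ^ 2 ≤ SA := by
          have h := entry_sq_le_frob_sq (Matrix.fromCols A1 A2) i (Sum.inr j)
          simpa [Matrix.fromCols_apply_inr] using h
        have hd : (A2 i j - X2 t i j) ^ 2 ≤ 4 * C := by
          have hw := h2 i j
          have hw2 : (1:ℝ)/4 ≤ (W2 t i j) ^ 2 := by nlinarith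
          have h6 : (A2 i j - X2 t i j) ^ 2 * (1/4) ≤ (A2 i j - X2 t i j) ^ 2 * (W2 t i j) ^ 2 :=
            mul_le_mul_of_nonneg_left hw2 (sq_nonneg _)
          have h7 : (A2 i j - X2 t i j) ^ 2 * (W2 t i j) ^ 2 ≤ C := by
            rw [← mul_pow]; exact hE2 t i j
          linarith
        simp only [Matrix.fromCols_apply_inr]
        nlinarith [sq_nonneg (2 * A2 i j - X2 t i j)]
    have hsum : ∑ i, ∑ j, (Matrix.fromCols (X1 t) (X2 t)) i j ^ 2 ≤
        ((m * (k + l) : ℕ) : ℝ) * B := by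
      calc ∑ i, ∑ j, (Matrix.fromCols (X1 t) (X2 t)) i j ^ 2
          ≤ ∑ _i : Fin m, ∑ _j : Fin k ⊕ Fin l, B :=
            Finset.sum_le_sum fun i _ => Finset.sum_le_sum fun j _ => hEntry i j
        _ = ((m * (k + l) : ℕ) : ℝ) * B := by
            simp [Finset.sum_const, Finset.card_univ]
            push_cast
            ring
    exact Real.sqrt_le_sqrt hsum
  · -- accumulation points
    rintro L ⟨φ, hφmono, hφL⟩
    have hentry : ∀ i j, Tendsto (fun t => Matrix.fromCols (X1 (φ t)) (X2 (φ t)) i j)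
        atTop (𝓝 (L i j)) := fun i j => (tendsto_pi_nhds.1 ((tendsto_pi_nhds.1 hφL) i)) j
    have hL1 : ∀ i j, L i (Sum.inl j) = A1 i j := by
      intro i j
      have habs : ∀ t, |A1 i j - X1 t i j| ≤ Real.sqrt C / W1 t i j := by
        intro t
        have h1 : |(A1 i j - X1 t i j) * W1 t i j| ≤ Real.sqrt C := Real.abs_le_sqrt (hE1 t i j)
        rw [abs_mul, abs_of_pos (hW1pos t i j)] at h1
        exact (le_div_iff₀ (hW1pos t i j)).2 h1
      have hb : Tendsto (fun t => Real.sqrt C / W1 (φ t) i j) atTop (𝓝 0) :=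
        (Filter.Tendsto.div_atTop tendsto_const_nhds (hW1 i j)).comp hφmono.tendsto_atTop
      have hd0 : Tendsto (fun t => A1 i j - X1 (φ t) i j) atTop (𝓝 0) := by
        rw [tendsto_zero_iff_abs_tendsto_zero]
        exact squeeze_zero (fun t => abs_nonneg _) (fun t => habs (φ t)) hb
      have hd : Tendsto (fun t => A1 i j - X1 (φ t) i j) atTop (𝓝 (A1 i j - L i (Sum.inl j))) := by
        have h := hentry i (Sum.inl j)
        simp only [Matrix.fromCols_apply_inl] at h
        exact tendsto_const_nhds.sub h
      have h0 := tendsto_nhds_unique hd hd0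
      linarith [h0]
    set Z2 : Matrix (Fin m) (Fin l) ℝ := Matrix.of fun i j => L i (Sum.inr j) with hZ2
    have hLeq : L = Matrix.fromCols A1 Z2 := by
      ext i j
      cases j with
      | inl j => simp [Matrix.fromCols_apply_inl, hL1 i j]
      | inr j => simp [Matrix.fromCols_apply_inr, hZ2]
    refine ⟨L.rank, ?_, Z2, hLeq, by rw [← hLeq], ?_⟩
    · refine le_min ?_ ?_
      · simpa using L.rank_le_card_height
      · simpa using L.rank_le_card_width
    · intro Y2 hY2
      have hlsc := rank_lsc L _ hφL
      have hZ2lim : ∀ i j, Tendsto (fun t => X2 (φ t) i j) atTop (𝓝 (Z2 i j)) := by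
        intro i j
        have h := hentry i (Sum.inr j)
        simpa [Matrix.fromCols_apply_inr, hZ2] using h
      have hW2φ : ∀ i j, Tendsto (fun t => W2 (φ t) i j) atTop (𝓝 1) :=
        fun i j => (hW2 i j).comp hφmono.tendsto_atTop
      have hg : Tendsto (fun t => ∑ i, ∑ j, ((A2 i j - X2 (φ t) i j) * W2 (φ t) i j) ^ 2)
          atTop (𝓝 (∑ i, ∑ j, (A2 i j - Z2 i j) ^ 2)) := by
        refine tendsto_finset_sum _ fun i _ => tendsto_finset_sum _ fun j _ => ?_
        have h : Tendsto (fun t => (A2 i j - X2 (φ t) i j) * W2 (φ t) i j) atTop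
            (𝓝 ((A2 i j - Z2 i j) * 1)) :=
          (tendsto_const_nhds.sub (hZ2lim i j)).mul (hW2φ i j)
        simpa using h.pow 2
      have hh : Tendsto (fun t => ∑ i, ∑ j, ((A2 i j - Y2 i j) * W2 (φ t) i j) ^ 2)
          atTop (𝓝 (∑ i, ∑ j, (A2 i j - Y2 i j) ^ 2)) := by
        refine tendsto_finset_sum _ fun i _ => tendsto_finset_sum _ fun j _ => ?_
        have h : Tendsto (fun t => (A2 i j - Y2 i j) * W2 (φ t) i j) atTop
            (𝓝 ((A2 i j - Y2 i j) * 1)) := tendsto_const_nhds.mul (hW2φ i j)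
        simpa using h.pow 2
      have hle : ∀ᶠ t in atTop,
          (∑ i, ∑ j, ((A2 i j - X2 (φ t) i j) * W2 (φ t) i j) ^ 2) ≤
            ∑ i, ∑ j, ((A2 i j - Y2 i j) * W2 (φ t) i j) ^ 2 := by
        filter_upwards [hlsc] with t ht
        have hm := hmin (φ t) A1 Y2
        have e0 : frob (Matrix.hadamard (A1 - A1) (W1 (φ t))) ^ 2 = 0 := by
          simp [sub_self, Matrix.zero_hadamard, frob_zero]
        have e1 : frob (Matrix.hadamard (A2 - X2 (φ t)) (W2 (φ t))) ^ 2 =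
            ∑ i, ∑ j, ((A2 i j - X2 (φ t) i j) * W2 (φ t) i j) ^ 2 := by
          rw [frob_sq]; simp [Matrix.hadamard_apply, Matrix.sub_apply]
        have e2 : frob (Matrix.hadamard (A2 - Y2) (W2 (φ t))) ^ 2 =
            ∑ i, ∑ j, ((A2 i j - Y2 i j) * W2 (φ t) i j) ^ 2 := by
          rw [frob_sq]; simp [Matrix.hadamard_apply, Matrix.sub_apply]
        have h3 : τ * (L.rank : ℝ) ≤
            τ * ((Matrix.fromCols (X1 (φ t)) (X2 (φ t))).rank : ℝ) :=
          mul_le_mul_of_nonneg_left (Nat.cast_le.2 ht) hτ.le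
        have h4 : τ * ((Matrix.fromCols A1 Y2).rank : ℝ) ≤ τ * (L.rank : ℝ) :=
          mul_le_mul_of_nonneg_left (Nat.cast_le.2 hY2) hτ.le
        have h5 : 0 ≤ frob (Matrix.hadamard (A1 - X1 (φ t)) (W1 (φ t))) ^ 2 := sq_nonneg _
        rw [e0, e1, e2] at hm
        linarith
      have hfinal : ∑ i, ∑ j, (A2 i j - Z2 i j) ^ 2 ≤ ∑ i, ∑ j, (A2 i j - Y2 i j) ^ 2 :=
        le_of_tendsto_of_tendsto hg hh hle
      rw [frob, frob]
      apply Real.sqrt_le_sqrt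
      simpa [Matrix.sub_apply] using hfinal
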